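/- Let i ≤ m, j ≤ n, let s be an LCS of A_i and B_j (so s has length k = L(i,j)), and let (p_1,q_1), ..., (p_k,q_k) be any embedding of s in (A_i, B_j). Then for every 1 ≤ t ≤ k, the match (p_t, q_t) has rank exactly t, i.e., L(p_t, q_t) = t. -/

import Mathlib

/-- `s` is a common subsequence of `A` and `B`. -/
def IsCommonSubseq {α : Type*} (A B s : List α) : Prop :=
  s.Sublist A ∧ s.Sublist B

/-- `lcsL A B i j` is the maximum length of a common subsequence of the
length-`i` prefix of `A` and the length-`j` prefix of `B`. -/
noncomputable def lcsL {α : Type*} (A B : List α) (i j : ℕ) : ℕ :=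
  sSup {k | ∃ s : List α, IsCommonSubseq (A.take i) (B.take j) s ∧ s.length = k}

/-- `s` is a longest common subsequence of the length-`i` prefix of `A` and
the length-`j` prefix of `B`. -/
def IsLCS {α : Type*} (A B : List α) (i j : ℕ) (s : List α) : Prop :=
  IsCommonSubseq (A.take i) (B.take j) s ∧ s.length = lcsL A B i j

/-- The (1-indexed) pair `(i, j)` is a match: `a_i = b_j`. -/
def IsMatch {α : Type*} (A B : List α) (i j : ℕ) : Prop :=
  1 ≤ i ∧ i ≤ A.length ∧ 1 ≤ j ∧ j ≤ B.length ∧ A[i - 1]? = B[j - 1]?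

/-- `e` is an embedding of the list `s` in the pair of prefixes `(A_i, B_j)`:
a sequence of (1-indexed) position pairs, strictly increasing in both
coordinates, lying in `[1..i] × [1..j]`, such that the `t`-th pair points at
occurrences of the `t`-th character of `s` in both strings. -/
def IsEmbedding {α : Type*} (A B : List α) (i j : ℕ) (s : List α)
    (e : List (ℕ × ℕ)) : Prop :=
  e.Chain' (fun u v => u.1 < v.1 ∧ u.2 < v.2) ∧
  (∀ u ∈ e, 1 ≤ u.1 ∧ u.1 ≤ i ∧ 1 ≤ u.2 ∧ u.2 ≤ j) ∧
  List.Forall₂ (fun (u : ℕ × ℕ) (c : α) =>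
    A[u.1 - 1]? = some c ∧ B[u.2 - 1]? = some c) e s

/-- The match `(i, j)` is antidominant of rank `r` within the rectangle
`[1..I] × [1..J]`. -/
def IsAntidominant {α : Type*} (A B : List α) (r I J i j : ℕ) : Prop :=
  IsMatch A B i j ∧ i ≤ I ∧ j ≤ J ∧ lcsL A B i j = r ∧
  ¬ ∃ i' j', IsMatch A B i' j' ∧ lcsL A B i' j' = r ∧
    ((i' = i ∧ j < j' ∧ j' ≤ J) ∨ (j' = j ∧ i < i' ∧ i' ≤ I))

/-- `e` is an antidominant backtrace for `(i, j)`: a sequence of matches of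
length `L(i,j)`, strictly increasing in both coordinates, such that (setting
the `(k+1)`-st entry to `(i+1, j+1)`) the `t`-th match is antidominant of rank
`t` within the rectangle determined by the `(t+1)`-st entry minus one. -/
def IsAntidominantBacktrace {α : Type*} (A B : List α) (i j : ℕ)
    (e : List (ℕ × ℕ)) : Prop :=
  e.length = lcsL A B i j ∧
  e.Chain' (fun u v => u.1 < v.1 ∧ u.2 < v.2) ∧
  ∀ t < e.length,
    IsAntidominant A B (t + 1)
      (((e ++ [(i + 1, j + 1)]).getD (t + 1) (0, 0)).1 - 1)
      (((e ++ [(i + 1, j + 1)]).getD (t + 1) (0, 0)).2 - 1)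
      (e.getD t (0, 0)).1 (e.getD t (0, 0)).2


private lemma embed_sublist' {α β : Type*} {C : List α} {f : β → ℕ} :
    ∀ {e : List β} {s : List α} (d : ℕ),
    List.Forall₂ (fun u c => C[f u]? = some c) e s →
    e.Pairwise (fun u v => f u < f v) →
    (∀ u ∈ e, d ≤ f u) → s.Sublist (C.drop d) := by
  intro e s d hf
  induction hf generalizing d with
  | nil => intro _ _; exact List.nil_sublist _
  | @cons u c e s h₁ h₂ ih =>
    intro hp hd
    have hlt : f u < C.length := by
      by_contra h
      rw [List.getElem?_eq_none (le_of_not_gt h)] at h₁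
      exact Option.noConfusion rfl (heq_of_eq h₁)
    have hc : C[f u] = c := by
      rw [List.getElem?_eq_getElem hlt] at h₁
      exact Option.some.inj h₁
    have ihs : s.Sublist (C.drop (f u + 1)) :=
      ih (f u + 1) hp.of_cons (fun v hv => List.rel_of_pairwise_cons hp hv)
    have h3 : (c :: s).Sublist (C.drop (f u)) := by
      rw [List.drop_eq_getElem_cons hlt, hc]
      exact ihs.cons₂ c
    have h4 : (C.drop (f u)).Sublist (C.drop d) := by
      have hdu := hd u List.mem_cons_self
      have : f u = d + (f u - d) := by omega
      rw [this, ← List.drop_drop]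
      exact List.drop_sublist _ _
    exact h3.trans h4

private lemma lcs_bdd {α : Type*} (A B : List α) (i j : ℕ) :
    BddAbove {k | ∃ s : List α, IsCommonSubseq (A.take i) (B.take j) s ∧ s.length = k} :=
  ⟨(A.take i).length, fun _ ⟨_, hs, hl⟩ => hl ▸ hs.1.length_le⟩

theorem stmt_10 {α : Type*} [DecidableEq α] (A B : List α) (m n : ℕ)
    (hA : A.length = m) (hB : B.length = n) (i j : ℕ)
    (him : i ≤ m) (hjn : j ≤ n) (s : List α) (hs : IsLCS A B i j s)
    (k : ℕ) (hk : k = lcsL A B i j)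
    (e : List (ℕ × ℕ)) (he : IsEmbedding A B i j s e) :
    ∀ t, 1 ≤ t → t ≤ k →
      ∃ p q, e[t - 1]? = some (p, q) ∧ lcsL A B p q = t := by
  obtain ⟨⟨hsA, hsB⟩, hslen⟩ := hs
  obtain ⟨hch, hbnd, hf⟩ := he
  have hlen : e.length = s.length := hf.length_eq
  have hsk : s.length = k := by rw [hslen, hk]
  intro t ht1 htk
  have htlen : t - 1 < e.length := by omega
  set u := e[t - 1]'htlen with hu
  have hum : u ∈ e := hu ▸ List.getElem_mem htlen
  obtain ⟨hu1, hui, hu2, huj⟩ := hbnd u hum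
  haveI : IsTrans (ℕ × ℕ) (fun a b => a.1 < b.1 ∧ a.2 < b.2) :=
    ⟨fun _ _ _ h h' => ⟨h.1.trans h'.1, h.2.trans h'.2⟩⟩
  have hpw : e.Pairwise (fun a b => a.1 < b.1 ∧ a.2 < b.2) :=
    List.isChain_iff_pairwise.mp hch
  have hpw' := List.pairwise_iff_getElem.mp hpw
  refine ⟨u.1, u.2, ?_, ?_⟩
  · rw [List.getElem?_eq_getElem htlen]
  · -- prefix embedding
    have hfget := List.forall₂_iff_get.mp hf
    have hfA : List.Forall₂ (fun (v : ℕ × ℕ) c => (A.take u.1)[v.1 - 1]? = some c)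
        (e.take t) (s.take t) := by
      rw [List.forall₂_iff_get]
      refine ⟨by simp [hlen], ?_⟩
      intro a h₁ h₂
      simp only [List.get_eq_getElem, List.getElem_take]
      have hae : a < e.length := by simp at h₁; omega
      have hb := hbnd e[a] (List.getElem_mem hae)
      have hlt : e[a].1 - 1 < u.1 := by
        rcases Nat.lt_or_ge a (t - 1) with h | h
        · have := (hpw' a (t - 1) hae htlen h).1
          rw [← hu] at this
          omega
        · have ha' : a = t - 1 := by simp at h₁; omega
          have hx : e[a]'hae = u := by subst ha'; exact hu.symm
          rw [hx]
          omega
      rw [List.getElem?_take, if_pos hlt]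
      have := (hfget.2 a hae (by omega))
      simpa using this.1
    have hfB : List.Forall₂ (fun (v : ℕ × ℕ) c => (B.take u.2)[v.2 - 1]? = some c)
        (e.take t) (s.take t) := by
      rw [List.forall₂_iff_get]
      refine ⟨by simp [hlen], ?_⟩
      intro a h₁ h₂
      simp only [List.get_eq_getElem, List.getElem_take]
      have hae : a < e.length := by simp at h₁; omega
      have hb := hbnd e[a] (List.getElem_mem hae)
      have hlt : e[a].2 - 1 < u.2 := by
        rcases Nat.lt_or_ge a (t - 1) with h | h
        · have := (hpw' a (t - 1) hae htlen h).2
          rw [← hu] at this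
          omega
        · have ha' : a = t - 1 := by simp at h₁; omega
          have hx : e[a]'hae = u := by subst ha'; exact hu.symm
          rw [hx]
          omega
      rw [List.getElem?_take, if_pos hlt]
      have := (hfget.2 a hae (by omega))
      simpa using this.2
    have hpwt1 : (e.take t).Pairwise (fun a b : ℕ × ℕ => a.1 - 1 < b.1 - 1) := by
      refine List.Pairwise.imp_of_mem ?_ (hpw.sublist (List.take_sublist t e)) 
      intro a b ha hb h
      have := (hbnd a ((List.take_sublist t e).mem ha)).1
      omega
    have hpwt2 : (e.take t).Pairwise (fun a b : ℕ × ℕ => a.2 - 1 < b.2 - 1) := by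
      refine List.Pairwise.imp_of_mem ?_ (hpw.sublist (List.take_sublist t e)) 
      intro a b ha hb h
      have := (hbnd a ((List.take_sublist t e).mem ha)).2.2.1
      omega
    have hA1 : (s.take t).Sublist (A.take u.1) := by
      have := embed_sublist' (f := fun v : ℕ × ℕ => v.1 - 1) 0 hfA hpwt1
        (fun _ _ => Nat.zero_le _)
      simpa using this
    have hB1 : (s.take t).Sublist (B.take u.2) := by
      have := embed_sublist' (f := fun v : ℕ × ℕ => v.2 - 1) 0 hfB hpwt2
        (fun _ _ => Nat.zero_le _)
      simpa using this
    have hge : t ≤ lcsL A B u.1 u.2 := by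
      have : t ∈ {k | ∃ s' : List α, IsCommonSubseq (A.take u.1) (B.take u.2) s' ∧ s'.length = k} :=
        ⟨s.take t, ⟨hA1, hB1⟩, by simp; omega⟩
      exact le_csSup (lcs_bdd A B u.1 u.2) this
    -- suffix embedding
    have hfA' : List.Forall₂ (fun (v : ℕ × ℕ) c => (A.take i)[v.1 - 1]? = some c)
        (e.drop t) (s.drop t) := by
      rw [List.forall₂_iff_get]
      refine ⟨by simp [hlen], ?_⟩
      intro a h₁ h₂
      simp only [List.get_eq_getElem, List.getElem_drop]
      have hae : t + a < e.length := by simp at h₁; omega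
      have hb := hbnd e[t + a] (List.getElem_mem hae)
      rw [List.getElem?_take, if_pos (by omega)]
      have := (hfget.2 (t + a) hae (by omega)).1
      simpa using this
    have hfB' : List.Forall₂ (fun (v : ℕ × ℕ) c => (B.take j)[v.2 - 1]? = some c)
        (e.drop t) (s.drop t) := by
      rw [List.forall₂_iff_get]
      refine ⟨by simp [hlen], ?_⟩
      intro a h₁ h₂
      simp only [List.get_eq_getElem, List.getElem_drop]
      have hae : t + a < e.length := by simp at h₁; omega
      have hb := hbnd e[t + a] (List.getElem_mem hae)
      rw [List.getElem?_take, if_pos (by omega)]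
      have := (hfget.2 (t + a) hae (by omega)).2
      simpa using this
    have hpwd1 : (e.drop t).Pairwise (fun a b : ℕ × ℕ => a.1 - 1 < b.1 - 1) := by
      refine List.Pairwise.imp_of_mem ?_ (hpw.sublist (List.drop_sublist t e)) 
      intro a b ha hb h
      have := (hbnd a ((List.drop_sublist t e).mem ha)).1
      omega
    have hpwd2 : (e.drop t).Pairwise (fun a b : ℕ × ℕ => a.2 - 1 < b.2 - 1) := by
      refine List.Pairwise.imp_of_mem ?_ (hpw.sublist (List.drop_sublist t e)) 
      intro a b ha hb h
      have := (hbnd a ((List.drop_sublist t e).mem ha)).2.2.1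
      omega
    have hd1 : ∀ v ∈ e.drop t, u.1 ≤ v.1 - 1 := by
      intro v hv
      rw [List.mem_iff_getElem] at hv
      obtain ⟨a, ha, rfl⟩ := hv
      simp only [List.getElem_drop]
      have hae : t + a < e.length := by simp at ha; omega
      have := (hpw' (t - 1) (t + a) htlen hae (by omega)).1
      rw [← hu] at this
      omega
    have hd2 : ∀ v ∈ e.drop t, u.2 ≤ v.2 - 1 := by
      intro v hv
      rw [List.mem_iff_getElem] at hv
      obtain ⟨a, ha, rfl⟩ := hv
      simp only [List.getElem_drop]
      have hae : t + a < e.length := by simp at ha; omega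
      have := (hpw' (t - 1) (t + a) htlen hae (by omega)).2
      rw [← hu] at this
      omega
    have hA2 : (s.drop t).Sublist ((A.take i).drop u.1) :=
      embed_sublist' (f := fun v : ℕ × ℕ => v.1 - 1) u.1 hfA' hpwd1 hd1
    have hB2 : (s.drop t).Sublist ((B.take j).drop u.2) :=
      embed_sublist' (f := fun v : ℕ × ℕ => v.2 - 1) u.2 hfB' hpwd2 hd2
    -- get a witness of length lcsL A B u.1 u.2
    have hne : Set.Nonempty {k | ∃ s' : List α,
        IsCommonSubseq (A.take u.1) (B.take u.2) s' ∧ s'.length = k} :=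
      ⟨0, [], ⟨List.nil_sublist _, List.nil_sublist _⟩, rfl⟩
    obtain ⟨s', ⟨hs'A, hs'B⟩, hs'len'⟩ := Nat.sSup_mem hne (lcs_bdd A B u.1 u.2)
    have hs'len : s'.length = lcsL A B u.1 u.2 := hs'len'
    -- combine
    have hcA : (s' ++ s.drop t).Sublist (A.take i) := by
      have h1 : s'.Sublist ((A.take i).take u.1) := by
        rwa [List.take_take, min_eq_left hui]
      have := h1.append hA2
      rwa [List.take_append_drop] at this
    have hcB : (s' ++ s.drop t).Sublist (B.take j) := by
      have h1 : s'.Sublist ((B.take j).take u.2) := by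
        rwa [List.take_take, min_eq_left huj]
      have := h1.append hB2
      rwa [List.take_append_drop] at this
    have hle : (s' ++ s.drop t).length ≤ k := by
      rw [hk]
      exact le_csSup (lcs_bdd A B i j) ⟨s' ++ s.drop t, ⟨hcA, hcB⟩, rfl⟩
    simp only [List.length_append, List.length_drop, hsk, hs'len] at hle
    omega
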